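/- The hazard rate (Mills ratio reciprocal) h(x) = φ(x)/Φ̄(x) of the standard normal distribution satisfies 0 < h'(x) < 1 for all x ∈ ℝ, where h'(x) = h(x)(h(x) - x). -/

import Mathlib

noncomputable def phi (x : ℝ) : ℝ := (Real.sqrt (2 * Real.pi))⁻¹ * Real.exp (-x ^ 2 / 2)

noncomputable def Phibar (x : ℝ) : ℝ := ∫ t in Set.Ioi x, phi t

open Set MeasureTheory Filter Real

lemma phi_pos (x : ℝ) : 0 < phi x := by
  have h : 0 < Real.sqrt (2 * Real.pi) := Real.sqrt_pos.2 (by positivity)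
  exact mul_pos (inv_pos.2 h) (Real.exp_pos _)

lemma phi_continuous : Continuous phi := by
  unfold phi; continuity

lemma phi_integrable : Integrable phi := by
  have h := (integrable_exp_neg_mul_sq (by norm_num : (0:ℝ) < 1/2)).const_mul
    (Real.sqrt (2 * Real.pi))⁻¹
  refine h.congr (Filter.Eventually.of_forall fun t => ?_)
  unfold phi; ring_nf

lemma hasDerivAt_phi (x : ℝ) : HasDerivAt phi (-x * phi x) x := by
  have h : HasDerivAt (fun t : ℝ => -t ^ 2 / 2) (-x) x := by
    have := ((hasDerivAt_pow 2 x).neg).div_const 2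
    refine this.congr_deriv ?_
    ring
  have h2 := (h.exp).const_mul (Real.sqrt (2 * Real.pi))⁻¹
  refine h2.congr_deriv ?_
  unfold phi; ring

lemma tendsto_phi : Tendsto phi atTop (nhds 0) := by
  have h1 : Tendsto (fun x : ℝ => -x ^ 2 / 2) atTop atBot := by
    apply Tendsto.atBot_div_const (by norm_num)
    exact tendsto_neg_atBot_iff.mpr (tendsto_pow_atTop (by norm_num : 2 ≠ 0))
  have h2 := Real.tendsto_exp_atBot.comp h1
  have h3 := h2.const_mul (Real.sqrt (2 * Real.pi))⁻¹
  rw [mul_zero] at h3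
  refine h3.congr fun t => ?_
  simp [phi, Function.comp]

lemma Phibar_pos (x : ℝ) : 0 < Phibar x := by
  unfold Phibar
  rw [setIntegral_pos_iff_support_of_nonneg_ae
    (Filter.Eventually.of_forall fun t => (phi_pos t).le) phi_integrable.integrableOn]
  have hs : Function.support phi = Set.univ := by
    ext t; simp [Function.mem_support, (phi_pos t).ne']
  simp [hs]

lemma Phibar_eq (x : ℝ) : Phibar x = Phibar 0 - ∫ t in (0:ℝ)..x, phi t := by
  have key : ∀ a b : ℝ, a ≤ b → Phibar a = (∫ t in Set.Ioc a b, phi t) + Phibar b := by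
    intro a b hab
    unfold Phibar
    rw [← setIntegral_union (Ioc_disjoint_Ioi le_rfl) measurableSet_Ioi
      phi_integrable.integrableOn phi_integrable.integrableOn, Ioc_union_Ioi_eq_Ioi hab]
  rcases le_total 0 x with h | h
  · rw [intervalIntegral.integral_of_le h, key 0 x h]; ring
  · rw [intervalIntegral.integral_of_ge h, key x 0 h]
    simp [add_comm]

lemma hasDerivAt_Phibar (x : ℝ) : HasDerivAt Phibar (-phi x) x := by
  have h : HasDerivAt (fun u => ∫ t in (0:ℝ)..u, phi t) (phi x) x :=
    intervalIntegral.integral_hasDerivAt_right phi_integrable.intervalIntegrable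
      phi_continuous.aestronglyMeasurable.stronglyMeasurableAtFilter
      phi_continuous.continuousAt
  have h2 := (hasDerivAt_const x (Phibar 0)).sub h
  rw [zero_sub] at h2
  refine h2.congr_of_eventuallyEq (Filter.Eventually.of_forall fun u => ?_)
  rw [Phibar_eq u]; rfl

lemma integrable_mul_phi : Integrable (fun t => t * phi t) := by
  have hg := (integrable_mul_exp_neg_mul_sq (by norm_num : (0:ℝ) < 1/2)).const_mul
    (Real.sqrt (2 * Real.pi))⁻¹
  refine hg.congr (Filter.Eventually.of_forall fun t => ?_)
  unfold phi; ring_nf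

lemma integral_mul_phi (x : ℝ) : ∫ t in Set.Ioi x, t * phi t = phi x := by
  have h := integral_Ioi_of_hasDerivAt_of_tendsto (f := fun t => -phi t)
    (f' := fun t => t * phi t) (a := x) (m := 0)
    (phi_continuous.neg.continuousWithinAt)
    (fun t _ => by exact (hasDerivAt_phi t).neg.congr_deriv (by ring))
    integrable_mul_phi.integrableOn
    (by simpa using tendsto_phi.neg)
  simpa using h

lemma mills_upper (x : ℝ) : x * Phibar x < phi x := by
  have hint : IntegrableOn (fun t => (t - x) * phi t) (Set.Ioi x) := by
    have := (integrable_mul_phi.sub (phi_integrable.const_mul x)).integrableOn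
      (s := Set.Ioi x)
    refine this.congr_fun (fun t _ => by simp only [Pi.sub_apply]; ring) measurableSet_Ioi
  have h1 : ∫ t in Set.Ioi x, (t - x) * phi t = phi x - x * Phibar x := by
    have : ∀ t : ℝ, (t - x) * phi t = t * phi t - x * phi t := fun t => by ring
    simp_rw [this]
    rw [integral_sub (integrable_mul_phi.integrableOn)
      ((phi_integrable.const_mul x).integrableOn), integral_mul_phi]
    unfold Phibar
    rw [MeasureTheory.integral_const_mul]
  have h2 : 0 < ∫ t in Set.Ioi x, (t - x) * phi t := by
    rw [setIntegral_pos_iff_support_of_nonneg_ae _ hint]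
    · have hsub : Set.Ioi x ⊆ Function.support (fun t => (t - x) * phi t) ∩ Set.Ioi x := by
        intro t ht
        exact ⟨(mul_pos (sub_pos.2 ht) (phi_pos t)).ne', ht⟩
      refine lt_of_lt_of_le ?_ (measure_mono hsub)
      simp [Real.volume_Ioi]
    · filter_upwards [ae_restrict_mem measurableSet_Ioi] with t ht
      exact (mul_pos (sub_pos.2 ht) (phi_pos t)).le
  linarith

lemma hasDerivAt_millsF (t : ℝ) : HasDerivAt (fun s => -(s * phi s / (1 + s ^ 2)))
    (phi t * (1 - 2 / (1 + t ^ 2) ^ 2)) t := by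
  have ht : (1 : ℝ) + t ^ 2 ≠ 0 := by positivity
  have h1 : HasDerivAt (fun s : ℝ => s * phi s) (phi t + t * (-t * phi t)) t := by
    have := (hasDerivAt_id t).mul (hasDerivAt_phi t)
    refine this.congr_deriv ?_; simp [id]
  have h2 : HasDerivAt (fun s : ℝ => 1 + s ^ 2) (2 * t) t := by
    simpa using (hasDerivAt_pow 2 t).const_add 1
  have h3 := (h1.div h2 ht).neg
  refine h3.congr_deriv ?_
  field_simp
  ring

lemma integrable_phi_two : Integrable (fun t => phi t * (1 - 2 / (1 + t ^ 2) ^ 2)) := by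
  refine phi_integrable.mono' ?_ (Filter.Eventually.of_forall fun t => ?_)
  · have hc : Continuous fun t : ℝ => 1 - 2 / (1 + t ^ 2) ^ 2 :=
      continuous_const.sub (continuous_const.div
        ((continuous_const.add (continuous_pow 2)).pow 2) (fun t => by positivity))
    exact (phi_continuous.mul hc).aestronglyMeasurable
  · rw [Real.norm_eq_abs, abs_mul, abs_of_pos (phi_pos t)]
    have h1 : (0:ℝ) < (1 + t ^ 2) ^ 2 := by positivity
    have h2 : (1:ℝ) ≤ (1 + t ^ 2) ^ 2 := by nlinarith [sq_nonneg t]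
    have : |1 - 2 / (1 + t ^ 2) ^ 2| ≤ 1 := by
      rw [abs_le]
      constructor
      · have : 2 / (1 + t ^ 2) ^ 2 ≤ 2 := by
          rw [div_le_iff₀ h1]; nlinarith
        linarith
      · have : 0 < 2 / (1 + t ^ 2) ^ 2 := by positivity
        linarith
    nlinarith [phi_pos t]

lemma integral_phi_two (x : ℝ) :
    ∫ t in Set.Ioi x, phi t * (1 - 2 / (1 + t ^ 2) ^ 2) = x * phi x / (1 + x ^ 2) := by
  have h := integral_Ioi_of_hasDerivAt_of_tendsto
    (f := fun s => -(s * phi s / (1 + s ^ 2)))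
    (f' := fun t => phi t * (1 - 2 / (1 + t ^ 2) ^ 2)) (a := x) (m := 0)
    (((continuous_id.mul phi_continuous).div
      (continuous_const.add (continuous_pow 2)) (fun s => by simp only [Pi.add_apply]; positivity)).neg.continuousWithinAt)
    (fun t _ => hasDerivAt_millsF t)
    integrable_phi_two.integrableOn
    ?_
  · simpa using h
  · refine squeeze_zero_norm (fun s => ?_) tendsto_phi
    have h1 : (0:ℝ) < 1 + s ^ 2 := by positivity
    rw [norm_neg, Real.norm_eq_abs, abs_div, abs_of_pos h1, div_le_iff₀ h1, abs_mul,
      abs_of_pos (phi_pos s)]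
    nlinarith [phi_pos s, abs_nonneg s, sq_abs s, sq_nonneg (|s| - 1)]

lemma mills_lower (x : ℝ) : x * phi x < (1 + x ^ 2) * Phibar x := by
  have hx : (0:ℝ) < 1 + x ^ 2 := by positivity
  have hint : IntegrableOn (fun t => phi t * (2 / (1 + t ^ 2) ^ 2)) (Set.Ioi x) := by
    have := (phi_integrable.sub integrable_phi_two).integrableOn (s := Set.Ioi x)
    refine this.congr_fun (fun t _ => by simp only [Pi.sub_apply]; ring) measurableSet_Ioi
  have h1 : ∫ t in Set.Ioi x, phi t * (2 / (1 + t ^ 2) ^ 2)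
      = Phibar x - x * phi x / (1 + x ^ 2) := by
    have heq : ∀ t : ℝ, phi t * (2 / (1 + t ^ 2) ^ 2)
        = phi t - phi t * (1 - 2 / (1 + t ^ 2) ^ 2) := fun t => by ring
    simp_rw [heq]
    rw [integral_sub phi_integrable.integrableOn integrable_phi_two.integrableOn,
      integral_phi_two]
    rfl
  have h2 : 0 < ∫ t in Set.Ioi x, phi t * (2 / (1 + t ^ 2) ^ 2) := by
    rw [setIntegral_pos_iff_support_of_nonneg_ae _ hint]
    · have hsub : Set.Ioi x ⊆
          Function.support (fun t => phi t * (2 / (1 + t ^ 2) ^ 2)) ∩ Set.Ioi x := by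
        intro t ht
        refine ⟨?_, ht⟩
        have : 0 < phi t * (2 / (1 + t ^ 2) ^ 2) :=
          mul_pos (phi_pos t) (by positivity)
        exact this.ne'
      refine lt_of_lt_of_le ?_ (measure_mono hsub)
      simp [Real.volume_Ioi]
    · filter_upwards [ae_restrict_mem measurableSet_Ioi] with t _
      exact (mul_pos (phi_pos t) (by positivity)).le
  rw [h1] at h2
  have h3 : x * phi x / (1 + x ^ 2) < Phibar x := by linarith
  calc x * phi x = x * phi x / (1 + x ^ 2) * (1 + x ^ 2) := by field_simp
    _ < Phibar x * (1 + x ^ 2) := by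
        exact mul_lt_mul_of_pos_right h3 hx
    _ = (1 + x ^ 2) * Phibar x := by ring

lemma hasDerivAt_millsU (t : ℝ) :
    HasDerivAt (fun s => phi s ^ 2 - s * phi s * Phibar s - Phibar s ^ 2)
      (phi t * ((1 + t ^ 2) * Phibar t - t * phi t)) t := by
  have hphi := hasDerivAt_phi t
  have hP := hasDerivAt_Phibar t
  have h := ((hphi.pow 2).sub (((hasDerivAt_id t).mul hphi).mul hP)).sub (hP.pow 2)
  refine h.congr_deriv ?_
  simp [id]
  ring

lemma millsU_strictMono :
    StrictMono (fun s => phi s ^ 2 - s * phi s * Phibar s - Phibar s ^ 2) := by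
  apply strictMono_of_deriv_pos
  intro t
  rw [(hasDerivAt_millsU t).deriv]
  have := mills_lower t
  exact mul_pos (phi_pos t) (by linarith)

lemma tendsto_Phibar : Tendsto Phibar atTop (nhds 0) := by
  refine squeeze_zero_norm' ?_ tendsto_phi
  filter_upwards [Filter.eventually_ge_atTop (1:ℝ)] with s hs
  have h1 := mills_upper s
  have h2 := Phibar_pos s
  rw [Real.norm_eq_abs, abs_of_pos h2]
  nlinarith

lemma tendsto_mid : Tendsto (fun s => s * phi s * Phibar s) atTop (nhds 0) := by
  have hsq : Tendsto (fun s => phi s * phi s) atTop (nhds 0) := by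
    simpa using tendsto_phi.mul tendsto_phi
  refine squeeze_zero_norm' ?_ hsq
  filter_upwards [Filter.eventually_ge_atTop (0:ℝ)] with s hs
  have h1 := mills_upper s
  have h2 := Phibar_pos s
  have h3 := phi_pos s
  rw [Real.norm_eq_abs, abs_of_nonneg (by positivity)]
  nlinarith

lemma tendsto_millsU :
    Tendsto (fun s => phi s ^ 2 - s * phi s * Phibar s - Phibar s ^ 2) atTop (nhds 0) := by
  have h := ((tendsto_phi.mul tendsto_phi).sub tendsto_mid).sub
    (tendsto_Phibar.mul tendsto_Phibar)
  simp only [mul_zero, sub_zero, zero_sub, neg_zero, zero_mul] at h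
  refine h.congr fun s => by ring

lemma millsU_neg (x : ℝ) : phi x ^ 2 - x * phi x * Phibar x - Phibar x ^ 2 < 0 := by
  have h0 : phi (x+1) ^ 2 - (x+1) * phi (x+1) * Phibar (x+1) - Phibar (x+1) ^ 2 ≤ 0 :=
    ge_of_tendsto tendsto_millsU (Filter.eventually_atTop.2
      ⟨x+1, fun t ht => millsU_strictMono.monotone ht⟩)
  have h1 := millsU_strictMono (show x < x + 1 by linarith)
  simp only at h1
  linarith

/-- The standard normal hazard rate `h(x) = φ(x)/Φ̄(x)` satisfies
`h'(x) = h(x)(h(x) - x)` and `0 < h'(x) < 1` for all `x`. -/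
theorem stmt2 (x : ℝ) :
    deriv (fun t => phi t / Phibar t) x = (phi x / Phibar x) * (phi x / Phibar x - x) ∧
    0 < deriv (fun t => phi t / Phibar t) x ∧
    deriv (fun t => phi t / Phibar t) x < 1 := by
  have hP := Phibar_pos x
  have hd : HasDerivAt (fun t => phi t / Phibar t)
      ((phi x ^ 2 - x * phi x * Phibar x) / Phibar x ^ 2) x := by
    have h := (hasDerivAt_phi x).div (hasDerivAt_Phibar x) hP.ne'
    refine h.congr_deriv ?_
    field_simp
    ring
  have hderiv := hd.deriv
  have hnum : 0 < phi x ^ 2 - x * phi x * Phibar x := by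
    nlinarith [mul_pos (phi_pos x) (sub_pos.2 (mills_upper x))]
  refine ⟨?_, ?_, ?_⟩
  · rw [hderiv]
    field_simp
  · rw [hderiv]
    exact div_pos hnum (by positivity)
  · rw [hderiv, div_lt_one (by positivity)]
    have := millsU_neg x
    linarith
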